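/- Let α > 0 with α² = 2πL for an integer L ≥ 2. Then the family of functions e_{n₁,n₂}(k,q) = e^{iα(q n₂ - k n₁)}, (n₁, n₂) ∈ ℤ², is NOT complete in L²([0,α)²): there exists a nonzero f ∈ L²([0,α)²) orthogonal to all e_{n₁,n₂}. -/

import Mathlib

open MeasureTheory
open scoped ComplexConjugate

theorem stmt16 (α : ℝ) (hα : 0 < α) (L : ℕ) (hL : 2 ≤ L)
    (hα2 : α ^ 2 = 2 * Real.pi * L)
    (e : ℤ → ℤ → (ℝ × ℝ) → ℂ)
    (he : ∀ n₁ n₂ : ℤ, ∀ x : ℝ × ℝ,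
      e n₁ n₂ x =
        Complex.exp (Complex.I * (α : ℂ) * ((x.2 : ℂ) * (n₂ : ℂ) - (x.1 : ℂ) * (n₁ : ℂ))))
    (μ : Measure (ℝ × ℝ))
    (hμ : μ = volume.restrict (Set.Ico (0 : ℝ) α ×ˢ Set.Ico (0 : ℝ) α)) :
    ∃ f : (ℝ × ℝ) → ℂ, MemLp f 2 μ ∧ ¬ (f =ᵐ[μ] 0) ∧
      ∀ n₁ n₂ : ℤ, ∫ x, conj (e n₁ n₂ x) * f x ∂μ = 0 := by
  have hπ := Real.pi_pos
  set β : ℝ := 2 * Real.pi / α with hβ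
  refine ⟨fun x => Complex.exp (Complex.I * (β : ℂ) * (x.2 : ℂ)), ?_, ?_, ?_⟩
  · -- Memℒp
    haveI : IsFiniteMeasure μ := by
      subst hμ
      constructor
      rw [Measure.restrict_apply_univ]
      have : (Set.Ico (0:ℝ) α ×ˢ Set.Ico (0:ℝ) α : Set (ℝ × ℝ)) ⊆
          Set.Icc (0:ℝ) α ×ˢ Set.Icc (0:ℝ) α :=
        Set.prod_mono Set.Ico_subset_Icc_self Set.Ico_subset_Icc_self
      exact lt_of_le_of_lt (measure_mono this)
        (IsCompact.measure_lt_top (isCompact_Icc.prod isCompact_Icc))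
    have hcont : Continuous fun x : ℝ × ℝ => Complex.exp (Complex.I * (β : ℂ) * (x.2 : ℂ)) := by
      continuity
    refine MemLp.of_bound hcont.aestronglyMeasurable 1 ?_
    filter_upwards with x
    rw [Complex.norm_exp]
    have : (Complex.I * (β : ℂ) * (x.2 : ℂ)).re = 0 := by simp [Complex.mul_re]
    simp [this]
  · -- nonzero
    intro h
    have hμuniv : μ Set.univ = 0 := by
      have := h.symm
      have h0 : ∀ᵐ x ∂μ, (0:ℂ) = Complex.exp (Complex.I * (β : ℂ) * (x.2 : ℂ)) := this
      have : ∀ᵐ x ∂μ, False := by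
        filter_upwards [h0] with x hx
        exact (Complex.exp_ne_zero _) hx.symm
      simpa [ae_iff] using this
    rw [hμ, Measure.restrict_apply_univ] at hμuniv
    have : volume (Set.Ico (0:ℝ) α ×ˢ Set.Ico (0:ℝ) α) =
        ENNReal.ofReal α * ENNReal.ofReal α := by
      rw [Measure.volume_eq_prod, Measure.prod_prod, Real.volume_Ico]
      simp
    rw [this] at hμuniv
    have hα' : ENNReal.ofReal α ≠ 0 := by
      simp [ENNReal.ofReal_eq_zero, not_le, hα]
    exact (mul_ne_zero hα' hα') hμuniv
  · -- orthogonality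
    intro n₁ n₂
    have hαne : (α : ℝ) ≠ 0 := ne_of_gt hα
    have hintegrand : ∀ x : ℝ × ℝ,
        conj (e n₁ n₂ x) * Complex.exp (Complex.I * (β : ℂ) * (x.2 : ℂ)) =
        Complex.exp (Complex.I * (α : ℂ) * (n₁ : ℂ) * (x.1 : ℂ)) *
        Complex.exp (Complex.I * ((β : ℂ) - (α : ℂ) * (n₂ : ℂ)) * (x.2 : ℂ)) := by
      intro x
      rw [he, ← Complex.exp_conj, ← Complex.exp_add, ← Complex.exp_add]
      congr 1
      simp only [map_mul, map_sub, Complex.conj_I, Complex.conj_ofReal, map_intCast]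
      ring
    simp only [hintegrand]
    rw [hμ, Measure.volume_eq_prod, ← Measure.prod_restrict]
    rw [MeasureTheory.integral_prod_mul
      (f := fun k : ℝ => Complex.exp (Complex.I * (α:ℂ) * (n₁:ℂ) * (k:ℂ)))
      (g := fun q : ℝ => Complex.exp (Complex.I * ((β:ℂ) - (α:ℂ) * (n₂:ℂ)) * (q:ℂ)))]
    have hc : (Complex.I * ((β : ℂ) - (α : ℂ) * (n₂ : ℂ))) ≠ 0 := by
      intro h
      rcases mul_eq_zero.mp h with h | h
      · exact Complex.I_ne_zero h
      · have : (β : ℂ) = (α : ℂ) * (n₂ : ℂ) := by linear_combination h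
        have hr : β = α * n₂ := by exact_mod_cast this
        have h2 : 2 * Real.pi = α ^ 2 * n₂ := by
          have h3 : β * α = α * (n₂ : ℝ) * α := by rw [hr]
          rw [hβ, div_mul_cancel₀ _ hαne] at h3
          rw [sq]; linarith
        rw [hα2] at h2
        have h2π : (0:ℝ) < 2 * Real.pi := by positivity
        have h1 : (1 : ℝ) = (L : ℝ) * n₂ :=
          mul_left_cancel₀ (ne_of_gt h2π)
            (by rw [mul_one]; nth_rewrite 1 [h2]; ring)
        have h1' : (1 : ℤ) = (L : ℤ) * n₂ := by exact_mod_cast h1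
        have : (L : ℤ) ∣ 1 := ⟨n₂, h1'⟩
        have := Int.le_of_dvd one_pos this
        omega
    have hzero : (∫ y : ℝ in Set.Ico (0:ℝ) α,
        Complex.exp (Complex.I * ((β : ℂ) - (α : ℂ) * (n₂ : ℂ)) * (y : ℂ))) = 0 := by
      rw [MeasureTheory.integral_Ico_eq_integral_Ioo,
        ← MeasureTheory.integral_Ioc_eq_integral_Ioo,
        ← intervalIntegral.integral_of_le hα.le,
        integral_exp_mul_complex hc]
      have harg : Complex.I * ((β : ℂ) - (α : ℂ) * (n₂ : ℂ)) * (α : ℂ) =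
          ((1 - (L : ℤ) * n₂ : ℤ) : ℂ) * (2 * Real.pi * Complex.I) := by
        have hαc : (α : ℂ) ≠ 0 := by exact_mod_cast hαne
        have hβc : (β : ℂ) * (α : ℂ) = 2 * Real.pi := by
          rw [hβ]
          push_cast
          field_simp
        have hα2c : (α : ℂ) ^ 2 = 2 * Real.pi * L := by exact_mod_cast hα2
        push_cast
        calc Complex.I * ((β : ℂ) - (α : ℂ) * (n₂ : ℂ)) * (α : ℂ)
            = Complex.I * ((β : ℂ) * (α : ℂ)) - Complex.I * ((α : ℂ)^2 * n₂) := by ring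
          _ = (1 - (L : ℂ) * n₂) * (2 * Real.pi * Complex.I) := by
              rw [hβc, hα2c]; ring
      rw [harg, Complex.exp_int_mul_two_pi_mul_I]
      simp
    rw [hzero, mul_zero]
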